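/- Let G be a finite abelian group of odd order with a non-degenerate alternating bilinear pairing ⟨·,·⟩ : G × G → ℚ/ℤ. Then G is isomorphic to H × H for some finite abelian group H, and every maximal isotropic subgroup of G has order equal to √(#G). -/

import Mathlib

namespace OddSymplectic

abbrev Circ := AddCircle (1 : ℚ)

lemma circ_coe_eq_zero_iff (a : ℚ) : (↑a : Circ) = 0 ↔ ∃ m : ℤ, (m : ℚ) = a := by
  rw [AddCircle.coe_eq_zero_iff]
  simp [zsmul_eq_mul]

lemma card_torsion_circ (n : ℕ) (hn : 0 < n) :
    Nat.card {x : Circ // n • x = 0} = n := by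
  haveI : NeZero n := ⟨hn.ne'⟩
  have hn' : (n : ℚ) ≠ 0 := Nat.cast_ne_zero.mpr hn.ne'
  have hmem : ∀ k : ZMod n, (n : ℕ) • ((((k.val : ℚ) / n) : ℚ) : Circ) = 0 := by
    intro k
    rw [← AddCircle.coe_nsmul, circ_coe_eq_zero_iff]
    refine ⟨(k.val : ℤ), ?_⟩
    push_cast
    rw [nsmul_eq_mul, mul_div_cancel₀ _ hn']
  set f : ZMod n → {x : Circ // n • x = 0} := fun k => ⟨_, hmem k⟩ with hf
  have hinj : Function.Injective f := by
    intro k l hkl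
    have h0 : ((((k.val : ℚ) / n - (l.val : ℚ) / n) : ℚ) : Circ) = 0 := by
      have := Subtype.ext_iff.1 hkl
      simp only [hf] at this
      rw [QuotientAddGroup.mk_sub, this, sub_self]
    rw [circ_coe_eq_zero_iff] at h0
    obtain ⟨m, hm⟩ := h0
    have hq : (m : ℚ) * n = (k.val : ℚ) - (l.val : ℚ) := by
      rw [div_sub_div_same] at hm
      rw [hm, div_mul_cancel₀ _ hn']
    have hZ : m * (n : ℤ) = (k.val : ℤ) - (l.val : ℤ) := by exact_mod_cast hq
    have hzm : ((k.val : ℤ) : ZMod n) - ((l.val : ℤ) : ZMod n) = 0 := by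
      rw [← Int.cast_sub, ← hZ]
      push_cast
      simp
    rw [sub_eq_zero] at hzm
    have hk : ((k.val : ℕ) : ZMod n) = ((l.val : ℕ) : ZMod n) := by exact_mod_cast hzm
    rwa [ZMod.natCast_rightInverse k, ZMod.natCast_rightInverse l] at hk
  have hsurj : Function.Surjective f := by
    rintro ⟨x, hx⟩
    obtain ⟨q, rfl⟩ := QuotientAddGroup.mk_surjective x
    rw [← AddCircle.coe_nsmul, circ_coe_eq_zero_iff] at hx
    obtain ⟨m, hm⟩ := hx
    rw [nsmul_eq_mul] at hm
    have hq : q = (m : ℚ) / n := by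
      rw [eq_div_iff hn', mul_comm, hm]
    refine ⟨(m : ZMod n), ?_⟩
    rw [Subtype.ext_iff]
    show ((((((m : ZMod n)).val : ℚ) / n) : ℚ) : Circ) = (q : Circ)
    rw [← sub_eq_zero, ← QuotientAddGroup.mk_sub, circ_coe_eq_zero_iff]
    have hdvd : (n : ℤ) ∣ (((m : ZMod n).val : ℤ) - m) := by
      rw [← ZMod.intCast_zmod_eq_zero_iff_dvd, Int.cast_sub, Int.cast_natCast,
        ZMod.natCast_rightInverse, sub_self]
    obtain ⟨c, hc⟩ := hdvd
    refine ⟨c, ?_⟩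
    have hQ : (((m : ZMod n).val : ℚ)) - (m : ℚ) = (n : ℚ) * c := by exact_mod_cast hc
    rw [hq, div_sub_div_same, hQ, mul_comm, mul_div_assoc, div_self hn', mul_one]
  rw [Nat.card_congr (Equiv.ofBijective f ⟨hinj, hsurj⟩).symm, Nat.card_zmod]

lemma card_hom_zmod (n : ℕ) (hn : 0 < n) :
    Nat.card (ZMod n →+ Circ) = n := by
  have e1 : (ZMod n →+ Circ) ≃ {f : ℤ →+ Circ // f n = 0} := (ZMod.lift n).symm
  have e2 : {x : Circ // (n : ℕ) • x = 0} ≃ {f : ℤ →+ Circ // f n = 0} :=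
    (zmultiplesHom Circ).subtypeEquiv (fun a => by
      rw [zmultiplesHom_apply, natCast_zsmul])
  rw [Nat.card_congr (e1.trans e2.symm), card_torsion_circ n hn]

lemma card_characterModule (A : Type*) [AddCommGroup A] [Finite A] :
    Nat.card (A →+ Circ) = Nat.card A := by
  classical
  obtain ⟨ι, hι, n, hn, ⟨e⟩⟩ := AddCommGroup.equiv_directSum_zmod_of_finite' A
  haveI := hι
  have e1 : (A →+ Circ) ≃ ((DirectSum ι fun i => ZMod (n i)) →+ Circ) :=
    { toFun := fun f => f.comp e.symm.toAddMonoidHom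
      invFun := fun g => g.comp e.toAddMonoidHom
      left_inv := fun f => by ext a; simp
      right_inv := fun g => by ext a; simp }
  have e2 : ((DirectSum ι fun i => ZMod (n i)) →+ Circ) ≃ ∀ i, (ZMod (n i) →+ Circ) :=
    (DFinsupp.liftAddHom (β := fun i => ZMod (n i)) (γ := Circ)).symm.toEquiv
  have e3 : A ≃ ∀ i, ZMod (n i) := e.toEquiv.trans DFinsupp.equivFunOnFintype
  rw [Nat.card_congr (e1.trans e2), Nat.card_congr e3, Nat.card_pi, Nat.card_pi]
  exact Finset.prod_congr rfl (fun i _ => by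
    rw [card_hom_zmod (n i) (by have := hn i; omega), Nat.card_zmod])

section gpart

variable {G : Type*} [AddCommGroup G]

def orth (β : G →+ G →+ Circ) (H : AddSubgroup G) : AddSubgroup G where
  carrier := {g | ∀ h ∈ H, β g h = 0}
  zero_mem' := by intro h _; simp
  add_mem' := by intro a b ha hb h hh; rw [map_add]; simp [ha h hh, hb h hh]
  neg_mem' := by intro a ha h hh; rw [map_neg]; simp [ha h hh]

lemma mem_orth {β : G →+ G →+ Circ} {H : AddSubgroup G} {g : G} :
    g ∈ orth β H ↔ ∀ h ∈ H, β g h = 0 := Iff.rfl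

lemma skew {β : G →+ G →+ Circ} (halt : ∀ x, β x x = 0) (x y : G) :
    β x y = - β y x := by
  have h := halt (x + y)
  simp only [map_add, AddMonoidHom.add_apply, halt x, halt y] at h
  rw [eq_neg_iff_add_eq_zero]
  rw [zero_add, add_zero] at h
  rw [add_comm]
  exact h

variable [Fintype G]

lemma card_orth_mul (β : G →+ G →+ Circ) (hnd : ∀ x : G, β x = 0 → x = 0)
    (H : AddSubgroup G) :
    Nat.card (orth β H) * Nat.card H = Nat.card G := by
  classical
  have hcardG : Nat.card (G →+ Circ) = Nat.card G := card_characterModule G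
  have hfinChar : Finite (G →+ Circ) := by
    have hpos : 0 < Nat.card (G →+ Circ) := by rw [hcardG]; exact Nat.card_pos
    exact (Nat.card_pos_iff.mp hpos).2
  have hβinj : Function.Injective β := (injective_iff_map_eq_zero β).mpr hnd
  have hβbij : Function.Bijective β :=
    (Nat.bijective_iff_injective_and_card β).mpr ⟨hβinj, hcardG.symm ▸ rfl⟩
  have hres : Function.Surjective (fun c : G →+ Circ => c.comp H.subtype) := by
    have hsub : Function.Injective (H.subtype.toIntLinearMap) := Subtype.coe_injective
    have := CharacterModule.dual_surjective_of_injective H.subtype.toIntLinearMap hsub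
    intro a
    obtain ⟨c, hc⟩ := this a
    exact ⟨c, hc⟩
  set Φ : G →+ (↥H →+ Circ) :=
    AddMonoidHom.mk' (fun g => (β g).comp H.subtype)
      (fun a b => by ext h; simp [map_add]) with hΦ
  have hΦsurj : Function.Surjective Φ := by
    intro a
    obtain ⟨c, hc⟩ := hres a
    obtain ⟨g, hg⟩ := hβbij.2 c
    exact ⟨g, by rw [hΦ]; simpa [hg] using hc⟩
  have hker : Φ.ker = orth β H := by
    ext g
    rw [AddMonoidHom.mem_ker, mem_orth]
    constructor
    · intro h0 h hh
      have := DFunLike.congr_fun h0 ⟨h, hh⟩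
      simpa [hΦ] using this
    · intro hall
      ext h
      simpa [hΦ] using hall h h.2
  have hcard := AddSubgroup.card_eq_card_quotient_mul_card_addSubgroup Φ.ker
  rw [Nat.card_congr (QuotientAddGroup.quotientKerEquivOfSurjective Φ hΦsurj).toEquiv,
    card_characterModule ↥H, hker] at hcard
  rw [mul_comm]
  exact hcard.symm

end gpart

section gpart2

variable {G : Type*} [AddCommGroup G]

lemma orth_eq_of_maximal (β : G →+ G →+ Circ) (halt : ∀ x, β x x = 0)
    {H : AddSubgroup G}
    (hiso : ∀ x ∈ H, ∀ y ∈ H, β x y = 0)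
    (hmax : ∀ K : AddSubgroup G, (∀ x ∈ K, ∀ y ∈ K, β x y = 0) → H ≤ K → K = H) :
    orth β H = H := by
  apply le_antisymm
  · intro x hx
    have hK : ∀ a ∈ H ⊔ AddSubgroup.zmultiples x, ∀ b ∈ H ⊔ AddSubgroup.zmultiples x,
        β a b = 0 := by
      intro a ha b hb
      rw [AddSubgroup.mem_sup] at ha hb
      obtain ⟨h, hh, u, hu, rfl⟩ := ha
      obtain ⟨h', hh', v, hv, rfl⟩ := hb
      obtain ⟨j, rfl⟩ := AddSubgroup.mem_zmultiples_iff.mp hu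
      obtain ⟨k, rfl⟩ := AddSubgroup.mem_zmultiples_iff.mp hv
      have e1 : β x h' = 0 := hx h' hh'
      have e2 : β h x = 0 := by rw [skew halt, hx h hh, neg_zero]
      have e3 : β h h' = 0 := hiso h hh h' hh'
      simp [map_add, map_zsmul, e1, e2, e3, halt x]
    have := hmax (H ⊔ AddSubgroup.zmultiples x) hK le_sup_left
    rw [← this]
    exact AddSubgroup.mem_sup_right (AddSubgroup.mem_zmultiples x)
  · intro h hh
    exact fun h' hh' => hiso h hh h' hh'

end gpart2

universe u

set_option maxHeartbeats 1000000 in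
lemma part1 (N : ℕ) : ∀ (G : Type u) [AddCommGroup G] [Fintype G],
    Fintype.card G ≤ N →
    ∀ (β : G →+ G →+ Circ), (∀ x, β x x = 0) → (∀ x : G, β x = 0 → x = 0) →
    ∃ (H : Type) (_ : AddCommGroup H) (_ : Fintype H), Nonempty (G ≃+ H × H) := by
  induction N with
  | zero =>
    intro G _ _ hle
    have := Fintype.card_pos (α := G)
    omega
  | succ N ih =>
    intro G _ _ hle β halt hnd
    classical
    by_cases htriv : Fintype.card G = 1
    · refine ⟨PUnit, inferInstance, inferInstance, ⟨?_⟩⟩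
      haveI : Subsingleton G := Fintype.card_le_one_iff_subsingleton.mp htriv.le
      exact AddEquiv.mk' (Fintype.equivOfCardEq (by simp [htriv])) (fun _ _ => Subsingleton.elim _ _)
    haveI : Nontrivial G := Fintype.one_lt_card_iff_nontrivial.mp
      (lt_of_le_of_ne Fintype.card_pos (Ne.symm htriv))
    set n := AddMonoid.exponent G with hndef
    have hn1 : 1 < n := AddMonoid.one_lt_exponent
    haveI : NeZero n := ⟨by omega⟩
    have hnx : ∀ g : G, n • g = 0 := AddMonoid.exponent_nsmul_eq_zero
    have hkill : ∀ (g : G) (j : ℤ), (n : ℤ) ∣ j → j • g = 0 := by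
      rintro g j ⟨c, rfl⟩
      rw [mul_zsmul, natCast_zsmul, hnx]
    obtain ⟨x, hx⟩ := AddMonoid.exists_addOrderOf_eq_exponent
      (AddMonoid.ExponentExists.of_finite (G := G))
    -- the set of values of β x is a finite subgroup with exponent n
    set S := (β x).range with hS
    haveI hSfin : Finite ↥S := (Set.finite_range ⇑(β x)).to_subtype
    have hSexp_dvd : AddMonoid.exponent ↥S ∣ n := by
      rw [AddMonoid.exponent_dvd_iff_forall_nsmul_eq_zero]
      rintro ⟨s, y, rfl⟩
      ext
      push_cast [AddSubgroup.coe_nsmul]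
      rw [← map_nsmul, hnx, map_zero]
    have hn_dvd : n ∣ AddMonoid.exponent ↥S := by
      rw [hndef, ← hx]
      apply addOrderOf_dvd_of_nsmul_eq_zero
      apply hnd
      ext y
      have := AddMonoid.exponent_nsmul_eq_zero (⟨β x y, ⟨y, rfl⟩⟩ : ↥S)
      rw [Subtype.ext_iff] at this
      push_cast [AddSubgroup.coe_nsmul] at this
      rw [map_nsmul, AddMonoidHom.nsmul_apply] at *
      simpa using this
    have hSexp : AddMonoid.exponent ↥S = n := Nat.dvd_antisymm hSexp_dvd hn_dvd
    obtain ⟨s, hs⟩ := AddMonoid.exists_addOrderOf_eq_exponent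
      (AddMonoid.ExponentExists.of_finite (G := ↥S))
    obtain ⟨y, hy⟩ := s.2
    have hxy : addOrderOf (β x y) = n := by
      rw [← hSexp, ← hs, ← AddSubgroup.addOrderOf_coe s, hy]
    -- the hyperbolic plane
    have hxn : addOrderOf x = n := by rw [hndef]; exact hx
    have hxz : (n : ℤ) • x = 0 := by rw [natCast_zsmul]; exact hnx x
    have hyz : (n : ℤ) • y = 0 := by rw [natCast_zsmul]; exact hnx y
    set xhom : ZMod n →+ G := ZMod.lift n ⟨zmultiplesHom G x, by
      rw [zmultiplesHom_apply]; exact hxz⟩ with hxhom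
    set yhom : ZMod n →+ G := ZMod.lift n ⟨zmultiplesHom G y, by
      rw [zmultiplesHom_apply]; exact hyz⟩ with hyhom
    have hxhomc : ∀ j : ℤ, xhom ((j : ZMod n)) = j • x := by
      intro j; rw [hxhom, ZMod.lift_coe, zmultiplesHom_apply]
    have hyhomc : ∀ j : ℤ, yhom ((j : ZMod n)) = j • y := by
      intro j; rw [hyhom, ZMod.lift_coe, zmultiplesHom_apply]
    have hcastZ : ∀ a : ZMod n, ((a.val : ℤ) : ZMod n) = a := fun a => by
      have := ZMod.natCast_rightInverse a; exact_mod_cast this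
    have hsmul_app : ∀ (j : ℤ) (a b : G), β (j • a) b = j • β a b := by
      intro j a b; rw [map_zsmul]; rfl
    have hdvd_of : ∀ j : ℤ, j • β x y = 0 → (n : ℤ) ∣ j := by
      intro j h
      have := (addOrderOf_dvd_iff_zsmul_eq_zero (x := β x y) (i := j)).mpr h
      rwa [hxy] at this
    have hcomb : ∀ j k : ℤ, j • x + k • y = 0 → (n : ℤ) ∣ j ∧ (n : ℤ) ∣ k := by
      intro j k h
      have h1 : β (j • x + k • y) y = 0 := by rw [h]; simp
      have h2 : β (j • x + k • y) x = 0 := by rw [h]; simp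
      rw [map_add, AddMonoidHom.add_apply, hsmul_app, hsmul_app, halt y, smul_zero,
        add_zero] at h1
      rw [map_add, AddMonoidHom.add_apply, hsmul_app, hsmul_app, halt x, smul_zero,
        zero_add, skew halt y x] at h2
      refine ⟨hdvd_of j h1, hdvd_of k ?_⟩
      rw [← neg_eq_zero, ← smul_neg]
      exact h2
    set P : AddSubgroup G := AddSubgroup.zmultiples x ⊔ AddSubgroup.zmultiples y with hP
    have hmemP : ∀ j k : ℤ, j • x + k • y ∈ P := by
      intro j k
      exact AddSubgroup.add_mem _
        (AddSubgroup.mem_sup_left (AddSubgroup.mem_zmultiples_iff.mpr ⟨j, rfl⟩))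
        (AddSubgroup.mem_sup_right (AddSubgroup.mem_zmultiples_iff.mpr ⟨k, rfl⟩))
    set φ : ZMod n × ZMod n →+ G := AddMonoidHom.coprod xhom yhom with hφ
    have hφapp : ∀ j k : ℤ, φ ((j : ZMod n), (k : ZMod n)) = j • x + k • y := by
      intro j k
      rw [hφ, AddMonoidHom.coprod_apply, hxhomc, hyhomc]
    have hφmem : ∀ p : ZMod n × ZMod n, φ p ∈ P := by
      intro ⟨a, b⟩
      have := hφapp (a.val : ℤ) (b.val : ℤ)
      rw [hcastZ, hcastZ] at this
      rw [this]
      exact hmemP _ _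
    set φ' : ZMod n × ZMod n →+ ↥P := φ.codRestrict P hφmem with hφ'
    have hφ'inj : Function.Injective φ' := by
      rw [injective_iff_map_eq_zero]
      intro ⟨a, b⟩ hab
      have hab' : φ ((a.val : ℤ), (b.val : ℤ)) = 0 := by
        rw [hcastZ, hcastZ]
        exact congrArg Subtype.val hab
      rw [hφapp] at hab'
      obtain ⟨hj, hk⟩ := hcomb _ _ hab'
      have ha : a = 0 := by
        rw [← hcastZ a, ZMod.intCast_zmod_eq_zero_iff_dvd]; exact hj
      have hb : b = 0 := by
        rw [← hcastZ b, ZMod.intCast_zmod_eq_zero_iff_dvd]; exact hk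
      rw [ha, hb]; rfl
    have hφ'surj : Function.Surjective φ' := by
      rintro ⟨g, hg⟩
      rw [hP, AddSubgroup.mem_sup] at hg
      obtain ⟨u, hu, v, hv, rfl⟩ := hg
      obtain ⟨j, rfl⟩ := AddSubgroup.mem_zmultiples_iff.mp hu
      obtain ⟨k, rfl⟩ := AddSubgroup.mem_zmultiples_iff.mp hv
      refine ⟨((j : ZMod n), (k : ZMod n)), ?_⟩
      apply Subtype.ext
      show φ _ = _
      rw [hφapp]
    have eP : ZMod n × ZMod n ≃+ ↥P := AddEquiv.ofBijective φ' ⟨hφ'inj, hφ'surj⟩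
    -- the orthogonal complement
    set Q : AddSubgroup G := orth β P with hQ
    set σ : ↥P × ↥Q →+ G := AddMonoidHom.coprod P.subtype Q.subtype with hσ
    have hyP : y ∈ P := by
      have := hmemP 0 1
      simpa using this
    have hxP : x ∈ P := by
      have := hmemP 1 0
      simpa using this
    have hPQ : ∀ g : G, g ∈ P → g ∈ Q → g = 0 := by
      intro g hgP hgQ
      rw [AddSubgroup.mem_sup] at hgP
      obtain ⟨u, hu, v, hv, rfl⟩ := hgP
      obtain ⟨j, rfl⟩ := AddSubgroup.mem_zmultiples_iff.mp hu
      obtain ⟨k, rfl⟩ := AddSubgroup.mem_zmultiples_iff.mp hv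
      have h1 : β (j • x + k • y) y = 0 := hgQ y hyP
      have h2 : β (j • x + k • y) x = 0 := hgQ x hxP
      rw [map_add, AddMonoidHom.add_apply, hsmul_app, hsmul_app, halt y, smul_zero,
        add_zero] at h1
      rw [map_add, AddMonoidHom.add_apply, hsmul_app, hsmul_app, halt x, smul_zero,
        zero_add, skew halt y x] at h2
      have hk : (n : ℤ) ∣ k := by
        apply hdvd_of
        rw [← neg_eq_zero, ← smul_neg]
        exact h2
      rw [hkill x j (hdvd_of j h1), hkill y k hk, add_zero]
    have hσinj : Function.Injective σ := by
      rw [injective_iff_map_eq_zero]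
      intro ⟨p, q⟩ hpq
      have hpq2 : (p : G) + (q : G) = 0 := hpq
      have hp0 : (p : G) = 0 := by
        apply hPQ _ p.2
        have : (p : G) = -(q : G) := by
          rw [eq_neg_iff_add_eq_zero]
          exact hpq2
        rw [this]
        exact neg_mem q.2
      have hq0 : (q : G) = 0 := by
        rw [hp0, zero_add] at hpq2
        exact hpq2
      exact Prod.ext (Subtype.ext hp0) (Subtype.ext hq0)
    have hcards : Nat.card (↥P × ↥Q) = Nat.card G := by
      rw [Nat.card_prod, mul_comm]
      exact card_orth_mul β hnd P
    have hσbij : Function.Bijective σ :=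
      (Nat.bijective_iff_injective_and_card σ).mpr ⟨hσinj, hcards⟩
    have eG : G ≃+ ↥P × ↥Q := (AddEquiv.ofBijective σ hσbij).symm
    -- the restricted form on Q
    set βQ : ↥Q →+ ↥Q →+ Circ := AddMonoidHom.mk'
      (fun a => (β (a : G)).comp Q.subtype)
      (fun a b => by ext c; simp [map_add]) with hβQ
    have haltQ : ∀ a : ↥Q, βQ a a = 0 := fun a => halt (a : G)
    have hndQ : ∀ a : ↥Q, βQ a = 0 → a = 0 := by
      intro a ha
      have hall : ∀ g : G, β (a : G) g = 0 := by
        intro g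
        obtain ⟨⟨p, q⟩, rfl⟩ := hσbij.2 g
        rw [hσ, AddMonoidHom.coprod_apply, map_add]
        have h1 : β (a : G) (p : G) = 0 := a.2 p p.2
        have h2 : β (a : G) (q : G) = 0 := by
          have := DFunLike.congr_fun ha q
          exact this
        simp [h1, h2]
      apply Subtype.ext
      apply hnd
      ext g
      exact hall g
    -- cardinality bound
    haveI : Nontrivial ↥P := by
      refine ⟨⟨⟨x, hxP⟩, 0, ?_⟩⟩
      intro hc
      have : x = 0 := congrArg Subtype.val hc
      rw [this, addOrderOf_zero] at hxn
      omega
    have hP2 : 2 ≤ Nat.card ↥P := Finite.one_lt_card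
    have hQ1 : 1 ≤ Nat.card ↥Q := Nat.card_pos
    have hmulQ : Nat.card ↥Q * Nat.card ↥P = Nat.card G := card_orth_mul β hnd P
    have hGN : Nat.card G ≤ N + 1 := by rw [Nat.card_eq_fintype_card]; exact hle
    haveI : Fintype ↥Q := Fintype.ofFinite _
    have h2q : 2 * Nat.card ↥Q ≤ Nat.card G := by
      calc 2 * Nat.card ↥Q ≤ Nat.card ↥P * Nat.card ↥Q := Nat.mul_le_mul_right _ hP2
        _ = Nat.card G := by rw [mul_comm]; exact hmulQ
    have hQle : Fintype.card ↥Q ≤ N := by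
      have hQcard : Nat.card ↥Q = Fintype.card ↥Q := Nat.card_eq_fintype_card
      omega
    obtain ⟨H, hg, hf, ⟨eQ⟩⟩ := ih ↥Q hQle βQ haltQ hndQ
    letI := hg; letI := hf
    exact ⟨ZMod n × H, inferInstance, inferInstance,
      ⟨eG.trans ((eP.symm.prodCongr eQ).trans (AddEquiv.prodProdProdComm (ZMod n) (ZMod n) H H))⟩⟩

end OddSymplectic

theorem odd_symplectic_group_structure
    (G : Type*) [AddCommGroup G] [Fintype G] (hodd : Odd (Fintype.card G))
    (B : G → G → ℚ ⧸ AddSubgroup.zmultiples (1 : ℚ))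
    (hadd_left : ∀ x y z : G, B (x + y) z = B x z + B y z)
    (hadd_right : ∀ x y z : G, B x (y + z) = B x y + B x z)
    (halt : ∀ x : G, B x x = 0)
    (hnondeg : ∀ x : G, (∀ y : G, B x y = 0) → x = 0) :
    (∃ (H : Type) (_ : AddCommGroup H) (_ : Fintype H),
        Nonempty (G ≃+ H × H))
    ∧ ∀ H : AddSubgroup G,
        (∀ x ∈ H, ∀ y ∈ H, B x y = 0) →
        (∀ K : AddSubgroup G, (∀ x ∈ K, ∀ y ∈ K, B x y = 0) → H ≤ K → K = H) →
        (Nat.card H : ℝ) = Real.sqrt (Fintype.card G) := by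
  classical
  set β : G →+ G →+ OddSymplectic.Circ :=
    AddMonoidHom.mk' (fun x => AddMonoidHom.mk' (B x) (fun y z => hadd_right x y z))
      (fun x y => by ext z; exact hadd_left x y z) with hβ
  have hβapp : ∀ x y, β x y = B x y := fun x y => rfl
  have halt' : ∀ x, β x x = 0 := fun x => halt x
  have hnd : ∀ x : G, β x = 0 → x = 0 := by
    intro x hx
    exact hnondeg x (fun y => by rw [← hβapp, hx]; rfl)
  constructor
  · exact OddSymplectic.part1 (Fintype.card G) G le_rfl β halt' hnd
  · intro H hiso hmax
    have horth : OddSymplectic.orth β H = H :=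
      OddSymplectic.orth_eq_of_maximal β halt' hiso hmax
    have hcard : Nat.card ↥H * Nat.card ↥H = Nat.card G := by
      have := OddSymplectic.card_orth_mul β hnd H
      rwa [horth] at this
    have hG : ((Fintype.card G : ℕ) : ℝ) = (Nat.card ↥H : ℝ) * (Nat.card ↥H : ℝ) := by
      rw [← Nat.card_eq_fintype_card, ← hcard]
      push_cast
      ring
    rw [hG, Real.sqrt_mul_self (Nat.cast_nonneg _)]
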